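/- Let X₁, X₂, X₃ ∈ ℂ and let r ∈ ℂ satisfy r² = X₁² − 1 and r ≠ 0. Define the matrices s₁ = [[X₁ + r, 0], [0, X₁ − r]] and s₂ = [[X₂ − (X₁X₂ − X₃)/r, 1], [−Θ(X₁,X₂,X₃)/(X₁² − 1), X₂ + (X₁X₂ − X₃)/r]]. Then det(s₁) = 1, det(s₂) = 1, tr(s₁) = 2X₁, tr(s₂) = 2X₂, and tr(s₁ s₂) = 2X₃ (i.e. the explicit section s of the trace-coordinate map π satisfies π ∘ s = id). -/

import Mathlib

open Matrix

/-- `Θ(X₁,X₂,X₃) := (X₃ − X₁X₂)² − (X₁² − 1)(X₂² − 1)`. -/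
def Theta (X₁ X₂ X₃ : ℂ) : ℂ := (X₃ - X₁ * X₂) ^ 2 - (X₁ ^ 2 - 1) * (X₂ ^ 2 - 1)

/-- The explicit section of the trace-coordinate map: given `r` with `r² = X₁² − 1`, `r ≠ 0`,
the matrices `s₁, s₂` have determinant 1 and realize the prescribed half-traces. -/
theorem section_of_trace_coordinates (X₁ X₂ X₃ r : ℂ) (hr : r ^ 2 = X₁ ^ 2 - 1) (hr0 : r ≠ 0) :
    let s₁ : Matrix (Fin 2) (Fin 2) ℂ := !![X₁ + r, 0; 0, X₁ - r]
    let s₂ : Matrix (Fin 2) (Fin 2) ℂ :=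
      !![X₂ - (X₁ * X₂ - X₃) / r, 1;
         -(Theta X₁ X₂ X₃) / (X₁ ^ 2 - 1), X₂ + (X₁ * X₂ - X₃) / r]
    s₁.det = 1 ∧ s₂.det = 1 ∧
      s₁.trace = 2 * X₁ ∧ s₂.trace = 2 * X₂ ∧ (s₁ * s₂).trace = 2 * X₃ := by
  intro s₁ s₂
  have hX : X₁ ^ 2 - 1 ≠ 0 := hr ▸ pow_ne_zero 2 hr0
  refine ⟨?_, ?_, ?_, ?_, ?_⟩
  · simp only [s₁, det_fin_two_of]
    linear_combination -hr
  · simp only [s₂, det_fin_two_of, Theta]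
    field_simp
    linear_combination (X₂^2*(X₁^2-1) - ((X₁^2-1)*(X₂^2-1)-(X₃-X₁*X₂)^2) - (X₁^2-1)) * hr
  · simp [s₁, trace_fin_two]; ring
  · simp [s₂, trace_fin_two]; ring
  · simp only [s₁, s₂, Matrix.mul_fin_two, trace_fin_two, Matrix.cons_val', Matrix.cons_val_zero,
      Matrix.cons_val_one, Matrix.head_cons, Matrix.head_fin_const, Matrix.empty_val',
      Matrix.cons_val_fin_one, Matrix.of_apply]
    field_simp
    ring
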